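/- Let φ_t : (μ_{A,t}, P_{A,t}) → (μ_{B,t}, P_{B,t}) and φ'_t : (μ'_{A,t}, P'_{A,t}) → (μ'_{B,t}, P'_{B,t}) be two equivalent one-parameter formal deformations of a morphism of Nijenhuis algebras φ : (A, P_A) → (B, P_B), via a formal isomorphism (F_{A,t}, F_{B,t}) with F_{A,0} = id_A and F_{B,0} = id_B. Then their infinitesimals are cohomologous in H^2_NjM(φ,φ): the difference ((μ_{A,1}, μ_{B,1}, φ_1), (P_{A,1}, P_{B,1}, 0)) − ((μ'_{A,1}, μ'_{B,1}, φ'_1), (P'_{A,1}, P'_{B,1}, 0)) equals D^1 applied to the 1-cochain determined by (F_{A,1}, F_{B,1}). -/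

import Mathlib

/-- The Nijenhuis operator condition on an associative algebra. -/
def IsNijenhuis {A : Type*} [Ring A] (P : A → A) : Prop :=
  ∀ x y : A, P x * P y = P (P x * y + x * P y - P (x * y))

/-- The deformed product `x ·_P y := P x * y + x * P y - P (x * y)`. -/
def dmul {A : Type*} [Ring A] (P : A → A) (x y : A) : A :=
  P x * y + x * P y - P (x * y)

/-- A bimodule structure over an associative algebra `A`, with `l x m = x·m`
and `r x m = m·x`. -/
structure BimoduleStr (k A M : Type*) [Field k] [Ring A] [Algebra k A]
    [AddCommGroup M] [Module k M] where
  l : A →ₗ[k] M →ₗ[k] M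
  r : A →ₗ[k] M →ₗ[k] M
  l_mul : ∀ (x y : A) (m : M), l (x * y) m = l x (l y m)
  r_mul : ∀ (x y : A) (m : M), r (x * y) m = r y (r x m)
  lr : ∀ (x y : A) (m : M), r y (l x m) = l x (r y m)

def actL {k A M : Type*} [Field k] [Ring A] [Algebra k A] [AddCommGroup M] [Module k M]
    (ρ : BimoduleStr k A M) : A → M → M := fun a m => ρ.l a m

def actR {k A M : Type*} [Field k] [Ring A] [Algebra k A] [AddCommGroup M] [Module k M]
    (ρ : BimoduleStr k A M) : A → M → M := fun a m => ρ.r a m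

/-- `(M, PM)` is a Nijenhuis bimodule over the Nijenhuis algebra `(A, P)`. -/
def IsNijBimodule {k A M : Type*} [Field k] [Ring A] [Algebra k A]
    [AddCommGroup M] [Module k M] (P : A →ₗ[k] A) (ρ : BimoduleStr k A M)
    (PM : M →ₗ[k] M) : Prop :=
  (∀ (x : A) (m : M), ρ.l (P x) (PM m) = PM (ρ.l (P x) m + ρ.l x (PM m) - PM (ρ.l x m))) ∧
  (∀ (x : A) (m : M), ρ.r (P x) (PM m) = PM (ρ.r x (PM m) + ρ.r (P x) m - PM (ρ.r x m)))

/-- The deformed left action `x ▷ m := P(x)·m + x·PM(m) - PM(x·m)`. -/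
def dL {A M : Type*} [AddCommGroup M] (P : A → A) (PM : M → M)
    (l : A → M → M) (x : A) (m : M) : M :=
  l (P x) m + l x (PM m) - PM (l x m)

/-- The deformed right action `m ◁ x := PM(m)·x + m·P(x) - PM(m·x)`. -/
def dR {A M : Type*} [AddCommGroup M] (P : A → A) (PM : M → M)
    (r : A → M → M) (x : A) (m : M) : M :=
  r x (PM m) + r (P x) m - PM (r x m)

/-- Auxiliary map merging two adjacent slots by the multiplication. -/
def mergeAt {A : Type*} (mul : A → A → A) {n : ℕ} (i : Fin n) (x : Fin (n+1) → A)
    (j : Fin n) : A :=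
  if (j : ℕ) < (i : ℕ) then x j.castSucc
  else if (j : ℕ) = (i : ℕ) then mul (x j.castSucc) (x j.succ)
  else x j.succ

/-- The Hochschild differential of an `n`-cochain with coefficients in a bimodule
given by its left action `l` and right action `r`. -/
def hochd {A M : Type*} [AddCommGroup M] (mul : A → A → A) (l r : A → M → M)
    (n : ℕ) (f : (Fin n → A) → M) : (Fin (n+1) → A) → M :=
  fun x =>
    l (x 0) (f fun j => x j.succ)
      + ∑ i : Fin n, ((-1 : ℤ) ^ ((i : ℕ) + 1)) • f (mergeAt mul i x)
      + ((-1 : ℤ) ^ (n + 1)) • r (x (Fin.last n)) (f fun j => x j.castSucc)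

/-- The map `Φⁿ(f)(x₁,…,xₙ) = Σ_{k} Σ_{i₁<…<i_k} (-1)^{n-k} PM^{n-k}
(f(x₁,…,P x_{i₁},…,P x_{i_k},…,xₙ))`, the sum running over subsets `S ⊆ {1,…,n}`. -/
def Phi {A M : Type*} [AddCommGroup M] (P : A → A) (PM : M → M) (n : ℕ)
    (f : (Fin n → A) → M) : (Fin n → A) → M :=
  fun x => ∑ S : Finset (Fin n),
    ((-1 : ℤ) ^ (n - S.card)) • (PM^[n - S.card])
      (f fun i => if i ∈ S then P (x i) else x i)

/-- The deformed multiplication associated to a (raw) multiplication and an operator. -/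
def dmulG {A : Type*} [AddCommGroup A] (mul : A → A → A) (P : A → A) (x y : A) : A :=
  mul (P x) y + mul x (P y) - P (mul x y)

/-- The differential `δ_NjO` of the cochain complex of a Nijenhuis operator:
`δ_NjO(f) = - PM ∘ δ(f) + ∂(f)` where `∂` is the Hochschild differential of the
deformed algebra with coefficients in the deformed bimodule. -/
def njod {A M : Type*} [AddCommGroup A] [AddCommGroup M]
    (mul : A → A → A) (P : A → A) (l r : A → M → M) (PM : M → M)
    (n : ℕ) (f : (Fin n → A) → M) : (Fin (n+1) → A) → M :=
  fun x => - PM (hochd mul l r n f x)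
    + hochd (dmulG mul P) (dL P PM l) (dR P PM r) n f x

/-- The differential of the cochain complex of a Nijenhuis algebra,
`δ_NjA(f, g) = (δ(f), -δ_NjO(g) - Φ(f))`, in degree `m+1`. -/
def DNjA {A M : Type*} [AddCommGroup A] [AddCommGroup M]
    (mul : A → A → A) (P : A → A) (l r : A → M → M) (PM : M → M) (m : ℕ)
    (c : ((Fin (m+1) → A) → M) × ((Fin m → A) → M)) :
    ((Fin (m+2) → A) → M) × ((Fin (m+1) → A) → M) :=
  ( hochd mul l r (m+1) c.1,
    fun x => - njod mul P l r PM m c.2 x - Phi P PM (m+1) c.1 x )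

/-- The differential `D` of the cochain complex of a Nijenhuis algebra morphism,
in degree `m+2`. -/
def DNjM {A B M N : Type*} [Ring A] [Ring B] [AddCommGroup M] [AddCommGroup N]
    (PA : A → A) (PB : B → B) (PM : M → M) (PN : N → N)
    (lM rM : A → M → M) (lN rN : B → N → N)
    (φ : A → B) (ψ : M → N) (m : ℕ)
    (c : (((Fin (m+2) → A) → M) × ((Fin (m+2) → B) → N) × ((Fin (m+1) → A) → N))
       × (((Fin (m+1) → A) → M) × ((Fin (m+1) → B) → N) × ((Fin m → A) → N))) :
    (((Fin (m+3) → A) → M) × ((Fin (m+3) → B) → N) × ((Fin (m+2) → A) → N))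
    × (((Fin (m+2) → A) → M) × ((Fin (m+2) → B) → N) × ((Fin (m+1) → A) → N)) :=
  (( hochd (· * ·) lM rM (m+2) c.1.1,
     hochd (· * ·) lN rN (m+2) c.1.2.1,
     fun x => ψ (c.1.1 x) - c.1.2.1 (fun i => φ (x i))
       - hochd (· * ·) (fun a nn => lN (φ a) nn) (fun a nn => rN (φ a) nn) (m+1) c.1.2.2 x ),
   ( fun x => njod (· * ·) PA lM rM PM (m+1) c.2.1 x
       + ((-1 : ℤ) ^ (m+2)) • Phi PA PM (m+2) c.1.1 x,
     fun x => njod (· * ·) PB lN rN PN (m+1) c.2.2.1 x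
       + ((-1 : ℤ) ^ (m+2)) • Phi PB PN (m+2) c.1.2.1 x,
     fun x => ψ (c.2.1 x) - c.2.2.1 (fun i => φ (x i))
       - njod (· * ·) PA (fun a nn => lN (φ a) nn) (fun a nn => rN (φ a) nn) PN m c.2.2.2 x
       + ((-1 : ℤ) ^ (m+2)) • Phi PA PN (m+1) c.1.2.2 x ))

/-- The differential `D¹` of the cochain complex of a Nijenhuis algebra morphism
in degree `1`. -/
def D1NjM {A B M N : Type*} [Ring A] [Ring B] [AddCommGroup M] [AddCommGroup N]
    (PA : A → A) (PB : B → B) (PM : M → M) (PN : N → N)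
    (lM rM : A → M → M) (lN rN : B → N → N)
    (φ : A → B) (ψ : M → N)
    (c : (((Fin 1 → A) → M) × ((Fin 1 → B) → N) × ((Fin 0 → A) → N))
       × (((Fin 0 → A) → M) × ((Fin 0 → B) → N))) :
    (((Fin 2 → A) → M) × ((Fin 2 → B) → N) × ((Fin 1 → A) → N))
    × (((Fin 1 → A) → M) × ((Fin 1 → B) → N) × ((Fin 0 → A) → N)) :=
  (( hochd (· * ·) lM rM 1 c.1.1,
     hochd (· * ·) lN rN 1 c.1.2.1,
     fun x => ψ (c.1.1 x) - c.1.2.1 (fun i => φ (x i)) ),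
   ( fun x => - Phi PA PM 1 c.1.1 x,
     fun x => - Phi PB PN 1 c.1.2.1 x,
     fun x => ψ (c.2.1 x) - c.2.2 (fun i => φ (x i)) - c.1.2.2 x ))

/-- The multiplication on `A[[t]]` (formal power series with coefficients in `A`,
encoded as sequences of coefficients) induced by a formal sum `μ_t = Σ μ_i tⁱ`
of bilinear maps. -/
def seriesMul {k A : Type*} [Field k] [Ring A] [Algebra k A]
    (μ : ℕ → A →ₗ[k] A →ₗ[k] A) (a b : ℕ → A) : ℕ → A :=
  fun n => ∑ p ∈ Finset.HasAntidiagonal.antidiagonal n, ∑ q ∈ Finset.HasAntidiagonal.antidiagonal p.2,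
    μ p.1 (a q.1) (b q.2)

/-- The map `A[[t]] → B[[t]]` induced by a formal sum `Σ P_i tⁱ` of linear maps. -/
def seriesApp {k A B : Type*} [Field k] [AddCommGroup A] [Module k A]
    [AddCommGroup B] [Module k B]
    (Pt : ℕ → A →ₗ[k] B) (a : ℕ → A) : ℕ → B :=
  fun n => ∑ p ∈ Finset.HasAntidiagonal.antidiagonal n, Pt p.1 (a p.2)

/-- A one-parameter formal deformation of a morphism of Nijenhuis algebras
`φ : (A, PA) → (B, PB)`: the deformed structures make `A[[t]]` and `B[[t]]`
into Nijenhuis algebras over `k[[t]]` and `φ_t` into a morphism of Nijenhuis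
algebras. -/
structure IsFormalDeformation {k A B : Type*} [Field k] [Ring A] [Algebra k A]
    [Ring B] [Algebra k B]
    (φ : A →ₐ[k] B) (PA : A →ₗ[k] A) (PB : B →ₗ[k] B)
    (μA : ℕ → A →ₗ[k] A →ₗ[k] A) (PAt : ℕ → A →ₗ[k] A)
    (μB : ℕ → B →ₗ[k] B →ₗ[k] B) (PBt : ℕ → B →ₗ[k] B)
    (φt : ℕ → A →ₗ[k] B) : Prop where
  muA0 : ∀ x y : A, μA 0 x y = x * y
  muB0 : ∀ x y : B, μB 0 x y = x * y
  PA0 : PAt 0 = PA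
  PB0 : PBt 0 = PB
  phi0 : ∀ x : A, φt 0 x = φ x
  assocA : ∀ a b c : ℕ → A,
    seriesMul μA a (seriesMul μA b c) = seriesMul μA (seriesMul μA a b) c
  nijA : ∀ a b : ℕ → A,
    seriesMul μA (seriesApp PAt a) (seriesApp PAt b)
      = seriesApp PAt (seriesMul μA (seriesApp PAt a) b
          + seriesMul μA a (seriesApp PAt b) - seriesApp PAt (seriesMul μA a b))
  assocB : ∀ a b c : ℕ → B,
    seriesMul μB a (seriesMul μB b c) = seriesMul μB (seriesMul μB a b) c
  nijB : ∀ a b : ℕ → B,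
    seriesMul μB (seriesApp PBt a) (seriesApp PBt b)
      = seriesApp PBt (seriesMul μB (seriesApp PBt a) b
          + seriesMul μB a (seriesApp PBt b) - seriesApp PBt (seriesMul μB a b))
  mult : ∀ a b : ℕ → A,
    seriesApp φt (seriesMul μA a b) = seriesMul μB (seriesApp φt a) (seriesApp φt b)
  commP : ∀ a : ℕ → A,
    seriesApp φt (seriesApp PAt a) = seriesApp PBt (seriesApp φt a)

/-- A formal isomorphism `(F_{A,t}, F_{B,t})` from the deformation
`(μA, PAt, μB, PBt, φt)` to the deformation `(μA', PAt', μB', PBt', φt')`. -/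
structure IsFormalIso {k A B : Type*} [Field k] [Ring A] [Algebra k A]
    [Ring B] [Algebra k B]
    (μA : ℕ → A →ₗ[k] A →ₗ[k] A) (PAt : ℕ → A →ₗ[k] A)
    (μB : ℕ → B →ₗ[k] B →ₗ[k] B) (PBt : ℕ → B →ₗ[k] B)
    (φt : ℕ → A →ₗ[k] B)
    (μA' : ℕ → A →ₗ[k] A →ₗ[k] A) (PAt' : ℕ → A →ₗ[k] A)
    (μB' : ℕ → B →ₗ[k] B →ₗ[k] B) (PBt' : ℕ → B →ₗ[k] B)
    (φt' : ℕ → A →ₗ[k] B)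
    (F : ℕ → A →ₗ[k] A) (G : ℕ → B →ₗ[k] B) : Prop where
  F0 : F 0 = LinearMap.id
  G0 : G 0 = LinearMap.id
  FmulA : ∀ a b : ℕ → A,
    seriesApp F (seriesMul μA a b) = seriesMul μA' (seriesApp F a) (seriesApp F b)
  FPA : ∀ a : ℕ → A,
    seriesApp F (seriesApp PAt a) = seriesApp PAt' (seriesApp F a)
  GmulB : ∀ a b : ℕ → B,
    seriesApp G (seriesMul μB a b) = seriesMul μB' (seriesApp G a) (seriesApp G b)
  GPB : ∀ a : ℕ → B,
    seriesApp G (seriesApp PBt a) = seriesApp PBt' (seriesApp G a)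
  Gphi : ∀ a : ℕ → A,
    seriesApp G (seriesApp φt a) = seriesApp φt' (seriesApp F a)

section Helpers

variable {k A B : Type*} [Field k]

lemma seriesApp_coe_zero [AddCommGroup A] [Module k A] [AddCommGroup B] [Module k B]
    (Pt : ℕ → A →ₗ[k] B) (a : ℕ → A) :
    seriesApp Pt a 0 = Pt 0 (a 0) := by
  simp [seriesApp]

lemma seriesApp_coe_one [AddCommGroup A] [Module k A] [AddCommGroup B] [Module k B]
    (Pt : ℕ → A →ₗ[k] B) (a : ℕ → A) :
    seriesApp Pt a 1 = Pt 0 (a 1) + Pt 1 (a 0) := by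
  rw [seriesApp, Finset.Nat.sum_antidiagonal_eq_sum_range_succ_mk]
  simp [Finset.sum_range_succ]

lemma seriesMul_coe_zero [Ring A] [Algebra k A]
    (μ : ℕ → A →ₗ[k] A →ₗ[k] A) (a b : ℕ → A) :
    seriesMul μ a b 0 = μ 0 (a 0) (b 0) := by
  simp [seriesMul]

lemma seriesMul_coe_one [Ring A] [Algebra k A]
    (μ : ℕ → A →ₗ[k] A →ₗ[k] A) (a b : ℕ → A) :
    seriesMul μ a b 1 = μ 0 (a 0) (b 1) + μ 0 (a 1) (b 0) + μ 1 (a 0) (b 0) := by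
  rw [seriesMul, Finset.Nat.sum_antidiagonal_eq_sum_range_succ_mk]
  rw [Finset.sum_range_succ, Finset.sum_range_succ, Finset.sum_range_zero]
  rw [Finset.Nat.sum_antidiagonal_eq_sum_range_succ_mk,
      Finset.Nat.sum_antidiagonal_eq_sum_range_succ_mk]
  simp [Finset.sum_range_succ]

/-- The delta series concentrated in degree 0. -/
def epsSeries [Zero A] (x : A) : ℕ → A := fun n => if n = 0 then x else 0

@[simp] lemma epsSeries_zero [Zero A] (x : A) : epsSeries x 0 = x := rfl
@[simp] lemma epsSeries_one [Zero A] (x : A) : epsSeries (A := A) x 1 = 0 := rfl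

lemma Phi_one_eval {M : Type*} [AddCommGroup M] (P : A → A) (PM : M → M)
    (f : (Fin 1 → A) → M) (x : Fin 1 → A) :
    Phi P PM 1 f x = - PM (f x) + f (fun i => P (x i)) := by
  have huniv : (Finset.univ : Finset (Finset (Fin 1))) = {∅, {0}} := by decide
  rw [Phi, huniv, Finset.sum_pair (by decide)]
  have h1 : (fun i => if i ∈ (∅ : Finset (Fin 1)) then P (x i) else x i) = x := by
    funext i; simp
  have h2 : (fun i => if i ∈ ({0} : Finset (Fin 1)) then P (x i) else x i)
      = fun i => P (x i) := by
    funext i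
    have : i = 0 := Subsingleton.elim _ _
    simp [this]
  rw [h1, h2]
  simp

lemma hochd_one_eval {M : Type*} [AddCommGroup M] (mul : A → A → A) (l r : A → M → M)
    (f : (Fin 1 → A) → M) (x : Fin 2 → A) :
    hochd mul l r 1 f x
      = l (x 0) (f fun _ => x 1) - f (fun _ => mul (x 0) (x 1)) + r (x 1) (f fun _ => x 0) := by
  rw [hochd, Fin.sum_univ_one]
  have hm : mergeAt mul (0 : Fin 1) x = fun _ => mul (x 0) (x 1) := by
    funext j
    have : j = 0 := Subsingleton.elim _ _
    subst this
    simp only [mergeAt, Nat.lt_irrefl, if_false, if_pos rfl]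
    rfl
  have hs : (fun j : Fin 1 => x j.succ) = fun _ => x 1 := by
    funext j; have : j = 0 := Subsingleton.elim _ _; subst this; rfl
  have hc : (fun j : Fin 1 => x j.castSucc) = fun _ => x 0 := by
    funext j; have : j = 0 := Subsingleton.elim _ _; subst this; rfl
  rw [hm, hs, hc]
  have hl : x (Fin.last 1) = x 1 := rfl
  rw [hl]
  simp
  abel

end Helpers

/-- the infinitesimals of two equivalent one-parameter formal
deformations of a Nijenhuis algebra morphism `φ` are cohomologous in
`H²_NjM(φ,φ)`: their difference is `D¹` of the `1`-cochain determined by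
`(F_{A,1}, F_{B,1})`. -/
theorem equivalent_infinitesimals_cohomologous {k A B : Type*} [Field k]
    [Ring A] [Algebra k A] [Ring B] [Algebra k B]
    (PA : A →ₗ[k] A) (hA : IsNijenhuis (⇑PA))
    (PB : B →ₗ[k] B) (hB : IsNijenhuis (⇑PB))
    (φ : A →ₐ[k] B) (hφ : ∀ x : A, φ (PA x) = PB (φ x))
    (μA : ℕ → A →ₗ[k] A →ₗ[k] A) (PAt : ℕ → A →ₗ[k] A)
    (μB : ℕ → B →ₗ[k] B →ₗ[k] B) (PBt : ℕ → B →ₗ[k] B)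
    (φt : ℕ → A →ₗ[k] B)
    (hdef : IsFormalDeformation φ PA PB μA PAt μB PBt φt)
    (μA' : ℕ → A →ₗ[k] A →ₗ[k] A) (PAt' : ℕ → A →ₗ[k] A)
    (μB' : ℕ → B →ₗ[k] B →ₗ[k] B) (PBt' : ℕ → B →ₗ[k] B)
    (φt' : ℕ → A →ₗ[k] B)
    (hdef' : IsFormalDeformation φ PA PB μA' PAt' μB' PBt' φt')
    (F : ℕ → A →ₗ[k] A) (G : ℕ → B →ₗ[k] B)
    (hiso : IsFormalIso μA PAt μB PBt φt μA' PAt' μB' PBt' φt' F G) :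
    (( (fun x : Fin 2 → A => μA 1 (x 0) (x 1)),
       (fun x : Fin 2 → B => μB 1 (x 0) (x 1)),
       (fun x : Fin 1 → A => φt 1 (x 0)) ),
     ( (fun x : Fin 1 → A => PAt 1 (x 0)),
       (fun x : Fin 1 → B => PBt 1 (x 0)),
       (0 : (Fin 0 → A) → B) ))
    -
    (( (fun x : Fin 2 → A => μA' 1 (x 0) (x 1)),
       (fun x : Fin 2 → B => μB' 1 (x 0) (x 1)),
       (fun x : Fin 1 → A => φt' 1 (x 0)) ),
     ( (fun x : Fin 1 → A => PAt' 1 (x 0)),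
       (fun x : Fin 1 → B => PBt' 1 (x 0)),
       (0 : (Fin 0 → A) → B) ))
    = D1NjM (⇑PA) (⇑PB) (⇑PA) (⇑PB)
        (fun a m => a * m) (fun a m => m * a)
        (fun b nn => b * nn) (fun b nn => nn * b)
        (⇑φ) (⇑φ)
        (( (fun x : Fin 1 → A => F 1 (x 0)),
           (fun x : Fin 1 → B => G 1 (x 0)),
           (0 : (Fin 0 → A) → B) ),
         ( (0 : (Fin 0 → A) → A), (0 : (Fin 0 → B) → B) )) := by
  have key1 : ∀ x y : A, μA 1 x y - μA' 1 x y = x * F 1 y - F 1 (x * y) + F 1 x * y := by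
    intro x y
    have h := congrFun (hiso.FmulA (epsSeries x) (epsSeries y)) 1
    simp only [seriesApp_coe_one, seriesApp_coe_zero, seriesMul_coe_one,
      seriesMul_coe_zero, epsSeries_zero, epsSeries_one, map_zero,
      LinearMap.zero_apply, hiso.F0, LinearMap.id_coe, id_eq, hdef.muA0,
      hdef'.muA0, mul_zero, zero_mul, add_zero, zero_add] at h
    linear_combination (norm := abel) h
  have key2 : ∀ x y : B, μB 1 x y - μB' 1 x y = x * G 1 y - G 1 (x * y) + G 1 x * y := by
    intro x y
    have h := congrFun (hiso.GmulB (epsSeries x) (epsSeries y)) 1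
    simp only [seriesApp_coe_one, seriesApp_coe_zero, seriesMul_coe_one,
      seriesMul_coe_zero, epsSeries_zero, epsSeries_one, map_zero,
      LinearMap.zero_apply, hiso.G0, LinearMap.id_coe, id_eq, hdef.muB0,
      hdef'.muB0, mul_zero, zero_mul, add_zero, zero_add] at h
    linear_combination (norm := abel) h
  have key3 : ∀ x : A, φt 1 x - φt' 1 x = φ (F 1 x) - G 1 (φ x) := by
    intro x
    have h := congrFun (hiso.Gphi (epsSeries x)) 1
    simp only [seriesApp_coe_one, seriesApp_coe_zero, epsSeries_zero, epsSeries_one,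
      map_zero, hiso.F0, hiso.G0, LinearMap.id_coe, id_eq, hdef.phi0, hdef'.phi0,
      add_zero, zero_add] at h
    linear_combination (norm := abel) h
  have key4 : ∀ x : A, PAt 1 x - PAt' 1 x = PA (F 1 x) - F 1 (PA x) := by
    intro x
    have h := congrFun (hiso.FPA (epsSeries x)) 1
    simp only [seriesApp_coe_one, seriesApp_coe_zero, epsSeries_zero, epsSeries_one,
      map_zero, hiso.F0, LinearMap.id_coe, id_eq, hdef.PA0, hdef'.PA0,
      add_zero, zero_add] at h
    linear_combination (norm := abel) h
  have key5 : ∀ x : B, PBt 1 x - PBt' 1 x = PB (G 1 x) - G 1 (PB x) := by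
    intro x
    have h := congrFun (hiso.GPB (epsSeries x)) 1
    simp only [seriesApp_coe_one, seriesApp_coe_zero, epsSeries_zero, epsSeries_one,
      map_zero, hiso.G0, LinearMap.id_coe, id_eq, hdef.PB0, hdef'.PB0,
      add_zero, zero_add] at h
    linear_combination (norm := abel) h
  simp only [D1NjM, Prod.mk_sub_mk, Prod.mk.injEq]
  refine ⟨⟨?_, ?_, ?_⟩, ?_, ?_, ?_⟩
  · funext x
    rw [Pi.sub_apply, hochd_one_eval]
    exact key1 (x 0) (x 1)
  · funext x
    rw [Pi.sub_apply, hochd_one_eval]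
    exact key2 (x 0) (x 1)
  · funext x
    rw [Pi.sub_apply]
    exact key3 (x 0)
  · funext x
    rw [Pi.sub_apply, Phi_one_eval]
    rw [neg_add, neg_neg, ← sub_eq_add_neg]
    exact key4 (x 0)
  · funext x
    rw [Pi.sub_apply, Phi_one_eval]
    rw [neg_add, neg_neg, ← sub_eq_add_neg]
    exact key5 (x 0)
  · funext x
    simp
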